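/- Let β > 0 be real, ℓ ≥ 1 and q natural numbers. Let p₀ : ℝ^ℓ → ℝ be a polynomial function which is homogeneous of degree q, and define inductively p_{j+1} = −((2j+2)(2j+2+β))^{−1} Δ_y p_j, where Δ_y is the Laplacian in the variables y ∈ ℝ^ℓ. Then each p_j is a polynomial function homogeneous of degree q − 2j (identically zero when 2j > q), and the function h(r, y) = ∑_{0 ≤ j ≤ q/2} r^{2j} p_j(y) on ℝ × ℝ^ℓ is positively homogeneous of degree q (h(t·(r,y)) = t^q h(r,y) for t > 0) and satisfies the β-Laplace equation r^{−(1+β)} ∂_r(r^{1+β} ∂_r h) + Δ_y h = 0 at every point with r > 0. -/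

import Mathlib

noncomputable section

/-- Partial derivative in the radial variable `r` of a function on `ℝ × ℝ^ℓ`. -/
def pr {ℓ : ℕ} (f : ℝ × (Fin ℓ → ℝ) → ℝ) (p : ℝ × (Fin ℓ → ℝ)) : ℝ :=
  deriv (fun s : ℝ => f (s, p.2)) p.1

/-- Partial derivative in the variable `y_j` of a function on `ℝ × ℝ^ℓ`. -/
def py {ℓ : ℕ} (j : Fin ℓ) (f : ℝ × (Fin ℓ → ℝ) → ℝ) (p : ℝ × (Fin ℓ → ℝ)) : ℝ :=
  deriv (fun t : ℝ => f (p.1, Function.update p.2 j t)) (p.2 j)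

/-- Laplacian in the `y`-variables of a function on `ℝ × ℝ^ℓ`. -/
def lapy {ℓ : ℕ} (f : ℝ × (Fin ℓ → ℝ) → ℝ) (p : ℝ × (Fin ℓ → ℝ)) : ℝ :=
  ∑ j : Fin ℓ, py j (py j f) p

/-- Partial derivative in `y_j` of a function on `ℝ^ℓ`. -/
def pdY {ℓ : ℕ} (j : Fin ℓ) (f : (Fin ℓ → ℝ) → ℝ) (y : Fin ℓ → ℝ) : ℝ :=
  deriv (fun t : ℝ => f (Function.update y j t)) (y j)

/-- Laplacian of a function on `ℝ^ℓ`. -/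
def lapY {ℓ : ℕ} (f : (Fin ℓ → ℝ) → ℝ) (y : Fin ℓ → ℝ) : ℝ :=
  ∑ j : Fin ℓ, pdY j (pdY j f) y


open MvPolynomial in
lemma hasDerivAt_eval_update {ℓ : ℕ} (P : MvPolynomial (Fin ℓ) ℝ) (j : Fin ℓ)
    (y : Fin ℓ → ℝ) (t : ℝ) :
    HasDerivAt (fun s : ℝ => eval (Function.update y j s) P)
      (eval (Function.update y j t) (pderiv j P)) t := by
  induction P using MvPolynomial.induction_on with
  | C a => simpa using hasDerivAt_const t a
  | add P Q hP hQ => simpa using hP.fun_add hQ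
  | mul_X P i hP =>
    rcases eq_or_ne i j with rfl | hij
    · have h := hP.mul (hasDerivAt_id t)
      simp only [eval_mul, eval_X, Function.update_self, pderiv_mul, pderiv_X_self,
        eval_add, map_one, mul_one, id] at h ⊢
      exact h
    · have h := hP.mul_const (y i)
      simp only [eval_mul, eval_X, Function.update_of_ne hij, pderiv_mul,
        pderiv_X_of_ne hij, eval_add, map_zero, mul_zero, add_zero] at h ⊢
      exact h

open MvPolynomial in
lemma pdY_eval {ℓ : ℕ} (P : MvPolynomial (Fin ℓ) ℝ) (j : Fin ℓ) (y : Fin ℓ → ℝ) :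
    pdY j (fun y => eval y P) y = eval y (pderiv j P) := by
  have h := (hasDerivAt_eval_update P j y (y j)).deriv
  simpa [pdY, Function.update_eq_self] using h

open MvPolynomial in
lemma lapY_eval {ℓ : ℕ} (P : MvPolynomial (Fin ℓ) ℝ) (y : Fin ℓ → ℝ) :
    lapY (fun y => eval y P) y = eval y (∑ i : Fin ℓ, pderiv i (pderiv i P)) := by
  rw [map_sum, lapY]
  refine Finset.sum_congr rfl fun i _ => ?_
  have h1 : pdY i (fun y => eval y P) = fun y => eval y (pderiv i P) :=
    funext fun y => pdY_eval P i y
  rw [h1, pdY_eval]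

open MvPolynomial in
lemma pdY_homog {ℓ : ℕ} {P : MvPolynomial (Fin ℓ) ℝ} {d : ℕ}
    (h : ∀ t : ℝ, 0 < t → ∀ y, eval (t • y) P = t ^ d * eval y P)
    (t : ℝ) (ht : 0 < t) (y : Fin ℓ → ℝ) (j : Fin ℓ) :
    t * eval (t • y) (pderiv j P) = t ^ d * eval y (pderiv j P) := by
  have key : ∀ s : ℝ, Function.update (t • y) j (t * s) = t • Function.update y j s := by
    intro s; funext i
    rcases eq_or_ne i j with rfl | hij
    · simp
    · simp [Function.update_of_ne hij]
  have h2 : Function.update (t • y) j (t * y j) = t • y := by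
    rw [key, Function.update_eq_self]
  have hF : HasDerivAt (fun u : ℝ => eval (Function.update (t • y) j u) P)
      (eval (t • y) (pderiv j P)) (t * y j) := by
    have h3 := hasDerivAt_eval_update P j (t • y) (t * y j)
    rwa [h2] at h3
  have h1 := hF.comp (y j) ((hasDerivAt_id (y j)).const_mul t)
  have hfun : ((fun u : ℝ => eval (Function.update (t • y) j u) P) ∘ fun s : ℝ => t * s)
      = fun s : ℝ => t ^ d * eval (Function.update y j s) P := by
    funext s
    simp only [Function.comp]
    rw [key s, h t ht]
  rw [hfun] at h1
  have h4 : HasDerivAt (fun s : ℝ => t ^ d * eval (Function.update y j s) P)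
      (t ^ d * eval y (pderiv j P)) (y j) := by
    simpa [Function.update_eq_self] using (hasDerivAt_eval_update P j y (y j)).const_mul (t ^ d)
  have h5 := h1.unique h4
  rw [← h5]; ring

open MvPolynomial in
lemma eval_pderiv_homog {ℓ : ℕ} {P : MvPolynomial (Fin ℓ) ℝ} {d : ℕ} (hd : 1 ≤ d)
    (h : ∀ t : ℝ, 0 < t → ∀ y, eval (t • y) P = t ^ d * eval y P)
    (t : ℝ) (ht : 0 < t) (y : Fin ℓ → ℝ) (j : Fin ℓ) :
    eval (t • y) (pderiv j P) = t ^ (d - 1) * eval y (pderiv j P) := by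
  have h1 := pdY_homog h t ht y j
  have hd1 : d = (d - 1) + 1 := by omega
  rw [hd1, pow_succ] at h1
  have h2 : t * eval (t • y) (pderiv j P) = t * (t ^ (d - 1) * eval y (pderiv j P)) := by
    rw [h1]; ring
  exact mul_left_cancel₀ (ne_of_gt ht) h2

open MvPolynomial in
lemma eval_pderiv_zero_of_inv {ℓ : ℕ} {P : MvPolynomial (Fin ℓ) ℝ}
    (h : ∀ t : ℝ, 0 < t → ∀ y, eval (t • y) P = eval y P)
    (y : Fin ℓ → ℝ) (j : Fin ℓ) : eval y (pderiv j P) = 0 := by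
  have hconst : ∀ z : Fin ℓ → ℝ, eval z P = eval (0 : Fin ℓ → ℝ) P := by
    intro z
    have h0 : Filter.Tendsto (fun t : ℝ => t • z) (nhdsWithin (0:ℝ) (Set.Ioi 0))
        (nhds (0 : Fin ℓ → ℝ)) := by
      have hc : Continuous fun t : ℝ => t • z := continuous_id.smul continuous_const
      have h00 := hc.tendsto 0
      simpa using h00.mono_left nhdsWithin_le_nhds
    have h1 : Filter.Tendsto (fun t : ℝ => eval (t • z) P) (nhdsWithin (0:ℝ) (Set.Ioi 0))
        (nhds (eval (0 : Fin ℓ → ℝ) P)) :=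
      ((MvPolynomial.continuous_eval P).tendsto _).comp h0
    have h2 : (fun t : ℝ => eval (t • z) P) =ᶠ[nhdsWithin (0:ℝ) (Set.Ioi 0)]
        fun _ => eval z P :=
      Filter.eventually_of_mem self_mem_nhdsWithin fun t ht => h t ht z
    exact (tendsto_nhds_unique (h1.congr' h2) tendsto_const_nhds).symm
  have hfun : (fun z => eval z P) = fun _ : Fin ℓ → ℝ => eval (0 : Fin ℓ → ℝ) P :=
    funext hconst
  have h3 := pdY_eval P j y
  rw [hfun] at h3
  rw [← h3]
  simp [pdY]

open MvPolynomial in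
lemma eval_pderiv2_zero_low {ℓ : ℕ} {P : MvPolynomial (Fin ℓ) ℝ} {d : ℕ} (hd : d ≤ 1)
    (h : ∀ t : ℝ, 0 < t → ∀ y, eval (t • y) P = t ^ d * eval y P)
    (y : Fin ℓ → ℝ) (i i' : Fin ℓ) : eval y (pderiv i' (pderiv i P)) = 0 := by
  have hinv : ∀ t : ℝ, 0 < t → ∀ z, eval (t • z) (pderiv i P) = eval z (pderiv i P) := by
    rcases Nat.le_one_iff_eq_zero_or_eq_one.mp hd with rfl | rfl
    · intro t ht z
      have hinv0 : ∀ t : ℝ, 0 < t → ∀ y, eval (t • y) P = eval y P := by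
        intro t ht y; simpa using h t ht y
      rw [eval_pderiv_zero_of_inv hinv0, eval_pderiv_zero_of_inv hinv0]
    · intro t ht z
      simpa using eval_pderiv_homog le_rfl h t ht z i
  exact eval_pderiv_zero_of_inv hinv y i'

open MvPolynomial in
lemma eval_lap_homog {ℓ : ℕ} {P : MvPolynomial (Fin ℓ) ℝ} {d : ℕ} (hd : 2 ≤ d)
    (h : ∀ t : ℝ, 0 < t → ∀ y, eval (t • y) P = t ^ d * eval y P)
    (t : ℝ) (ht : 0 < t) (y : Fin ℓ → ℝ) :
    eval (t • y) (∑ i : Fin ℓ, pderiv i (pderiv i P)) =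
      t ^ (d - 2) * eval y (∑ i : Fin ℓ, pderiv i (pderiv i P)) := by
  rw [map_sum, map_sum, Finset.mul_sum]
  refine Finset.sum_congr rfl fun i _ => ?_
  have h1 : ∀ t : ℝ, 0 < t → ∀ z, eval (t • z) (pderiv i P) =
      t ^ (d - 1) * eval z (pderiv i P) :=
    fun t ht z => eval_pderiv_homog (by omega) h t ht z i
  have h2 := eval_pderiv_homog (P := pderiv i P) (d := d - 1) (by omega) h1 t ht y i
  rw [h2]
  have h3 : d - 1 - 1 = d - 2 := by omega
  rw [h3]

open MvPolynomial in
lemma eval_lap_zero_low {ℓ : ℕ} {P : MvPolynomial (Fin ℓ) ℝ} {d : ℕ} (hd : d ≤ 1)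
    (h : ∀ t : ℝ, 0 < t → ∀ y, eval (t • y) P = t ^ d * eval y P)
    (y : Fin ℓ → ℝ) :
    eval y (∑ i : Fin ℓ, pderiv i (pderiv i P)) = 0 := by
  rw [map_sum]
  exact Finset.sum_eq_zero fun i _ => eval_pderiv2_zero_low hd h y i i

lemma lapY_zero_fn {ℓ : ℕ} (y : Fin ℓ → ℝ) :
    lapY (fun _ : Fin ℓ → ℝ => (0:ℝ)) y = 0 := by
  simp [lapY, pdY]

open MvPolynomial in
lemma py_sum_eval {ℓ m : ℕ} (Q : ℕ → MvPolynomial (Fin ℓ) ℝ) (i : Fin ℓ)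
    (z : ℝ × (Fin ℓ → ℝ)) :
    py i (fun w => ∑ j ∈ Finset.range m, w.1 ^ (2 * j) * eval w.2 (Q j)) z
      = ∑ j ∈ Finset.range m, z.1 ^ (2 * j) * eval z.2 (pderiv i (Q j)) := by
  have h : HasDerivAt
      (fun t : ℝ => ∑ j ∈ Finset.range m, z.1 ^ (2 * j) * eval (Function.update z.2 i t) (Q j))
      (∑ j ∈ Finset.range m, z.1 ^ (2 * j) * eval z.2 (pderiv i (Q j))) (z.2 i) := by
    refine HasDerivAt.fun_sum fun j hj => ?_
    have := (hasDerivAt_eval_update (Q j) i z.2 (z.2 i)).const_mul (z.1 ^ (2 * j))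
    simpa [Function.update_eq_self] using this
  simp only [py]
  exact h.deriv

lemma pr_sum {ℓ m : ℕ} (g : ℕ → (Fin ℓ → ℝ) → ℝ) (z : ℝ × (Fin ℓ → ℝ)) :
    pr (fun w => ∑ j ∈ Finset.range m, w.1 ^ (2 * j) * g j w.2) z
      = ∑ j ∈ Finset.range m, ((2 * j : ℕ) : ℝ) * z.1 ^ (2 * j - 1) * g j z.2 := by
  have h : HasDerivAt (fun s : ℝ => ∑ j ∈ Finset.range m, s ^ (2 * j) * g j z.2)
      (∑ j ∈ Finset.range m, ((2 * j : ℕ) : ℝ) * z.1 ^ (2 * j - 1) * g j z.2) z.1 :=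
    HasDerivAt.fun_sum fun j hj => (hasDerivAt_pow (2 * j) z.1).mul_const (g j z.2)
  simp only [pr]
  exact h.deriv


/-- Given a homogeneous degree-`q` polynomial `p₀` on `ℝ^ℓ` and the
inductively defined `p_{j+1} = -((2j+2)(2j+2+β))⁻¹ Δ_y p_j`, each `p_j` is a polynomial
function homogeneous of degree `q - 2j` (zero when `2j > q`), and
`h(r,y) = ∑_{0 ≤ j ≤ q/2} r^{2j} p_j(y)` is positively homogeneous of degree `q` and
satisfies the `β`-Laplace equation at every point with `r > 0`. -/
theorem stmt3 (β : ℝ) (hβ : 0 < β) (ℓ : ℕ) (hℓ : 1 ≤ ℓ) (q : ℕ)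
    (p : ℕ → (Fin ℓ → ℝ) → ℝ)
    (hpoly0 : ∃ P : MvPolynomial (Fin ℓ) ℝ, ∀ y, p 0 y = MvPolynomial.eval y P)
    (hhom0 : ∀ t : ℝ, 0 < t → ∀ y, p 0 (t • y) = t ^ q * p 0 y)
    (hrec : ∀ j : ℕ, p (j + 1) =
      fun y => -((2 * (j : ℝ) + 2) * (2 * (j : ℝ) + 2 + β))⁻¹ * lapY (p j) y) :
    (∀ j : ℕ, ∃ P : MvPolynomial (Fin ℓ) ℝ, ∀ y, p j y = MvPolynomial.eval y P) ∧
    (∀ j : ℕ, 2 * j ≤ q → ∀ t : ℝ, 0 < t → ∀ y, p j (t • y) = t ^ (q - 2 * j) * p j y) ∧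
    (∀ j : ℕ, q < 2 * j → ∀ y, p j y = 0) ∧
    (∀ t : ℝ, 0 < t → ∀ r : ℝ, ∀ y : Fin ℓ → ℝ,
      (∑ j ∈ Finset.range (q / 2 + 1), (t * r) ^ (2 * j) * p j (t • y)) =
        t ^ q * ∑ j ∈ Finset.range (q / 2 + 1), r ^ (2 * j) * p j y) ∧
    (∀ pt : ℝ × (Fin ℓ → ℝ), 0 < pt.1 →
      pt.1 ^ (-(1 + β)) *
          pr (fun z => z.1 ^ (1 + β) *
            pr (fun w => ∑ j ∈ Finset.range (q / 2 + 1), w.1 ^ (2 * j) * p j w.2) z) pt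
        + lapy (fun w => ∑ j ∈ Finset.range (q / 2 + 1), w.1 ^ (2 * j) * p j w.2) pt
        = 0) := by
  classical
  -- Part 1: each p j is a polynomial function
  have hpoly : ∀ j : ℕ, ∃ P : MvPolynomial (Fin ℓ) ℝ, ∀ y, p j y = MvPolynomial.eval y P := by
    intro j
    induction j with
    | zero => exact hpoly0
    | succ j ih =>
      obtain ⟨P, hPj⟩ := ih
      refine ⟨MvPolynomial.C (-((2 * (j : ℝ) + 2) * (2 * (j : ℝ) + 2 + β))⁻¹) *
        ∑ i : Fin ℓ, MvPolynomial.pderiv i (MvPolynomial.pderiv i P), ?_⟩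
      intro y
      rw [hrec j]
      have hfj : p j = fun y => MvPolynomial.eval y P := funext hPj
      simp only [hfj, lapY_eval, MvPolynomial.eval_mul, MvPolynomial.eval_C]
  choose P hP using hpoly
  have hfj : ∀ j, p j = fun y => MvPolynomial.eval y (P j) := fun j => funext (hP j)
  -- Part 2: homogeneity
  have hhom : ∀ j : ℕ, 2 * j ≤ q → ∀ t : ℝ, 0 < t → ∀ y,
      p j (t • y) = t ^ (q - 2 * j) * p j y := by
    intro j
    induction j with
    | zero => intro _ t ht y; simpa using hhom0 t ht y
    | succ j ih =>
      intro hj t ht y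
      have hj' : 2 * j ≤ q := by omega
      have hd : 2 ≤ q - 2 * j := by omega
      have hhomP : ∀ t : ℝ, 0 < t → ∀ y,
          MvPolynomial.eval (t • y) (P j) = t ^ (q - 2 * j) * MvPolynomial.eval y (P j) := by
        intro t ht y
        have h1 := ih hj' t ht y
        rwa [hP j, hP j] at h1
      rw [hrec j]
      simp only
      have hL : ∀ z, lapY (p j) z =
          MvPolynomial.eval z (∑ i : Fin ℓ, MvPolynomial.pderiv i (MvPolynomial.pderiv i (P j))) := by
        intro z; rw [hfj j]; exact lapY_eval (P j) z
      rw [hL, hL, eval_lap_homog hd hhomP t ht y]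
      have he : q - 2 * j - 2 = q - 2 * (j + 1) := by omega
      rw [he]; ring
  -- Part 3: vanishing
  have hzero : ∀ j : ℕ, q < 2 * j → ∀ y, p j y = 0 := by
    intro j
    induction j with
    | zero => intro h; exact absurd h (by omega)
    | succ j ih =>
      intro hj y
      rw [hrec j]
      simp only
      rcases le_or_gt (2 * j) q with h2 | h2
      · have hd : q - 2 * j ≤ 1 := by omega
        have hhomP : ∀ t : ℝ, 0 < t → ∀ y,
            MvPolynomial.eval (t • y) (P j) = t ^ (q - 2 * j) * MvPolynomial.eval y (P j) := by
          intro t ht y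
          have h1 := hhom j h2 t ht y
          rwa [hP j, hP j] at h1
        have hL : lapY (p j) y =
            MvPolynomial.eval y (∑ i : Fin ℓ, MvPolynomial.pderiv i (MvPolynomial.pderiv i (P j))) := by
          rw [hfj j]; exact lapY_eval (P j) y
        rw [hL, eval_lap_zero_low hd hhomP, mul_zero]
      · have hz : p j = fun _ => (0:ℝ) := funext (ih h2)
        rw [hz, lapY_zero_fn, mul_zero]
  refine ⟨fun j => ⟨P j, hP j⟩, hhom, hzero, ?_, ?_⟩
  · -- Part 4: homogeneity of h
    intro t ht r y
    rw [Finset.mul_sum]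
    refine Finset.sum_congr rfl fun j hj => ?_
    have hjq : 2 * j ≤ q := by
      have := Finset.mem_range.mp hj; omega
    rw [hhom j hjq t ht]
    have he : 2 * j + (q - 2 * j) = q := by omega
    calc (t * r) ^ (2 * j) * (t ^ (q - 2 * j) * p j y)
        = t ^ (2 * j + (q - 2 * j)) * (r ^ (2 * j) * p j y) := by
          rw [mul_pow, pow_add]; ring
      _ = t ^ q * (r ^ (2 * j) * p j y) := by rw [he]
  · -- Part 5: the PDE
    rintro ⟨r, y2⟩ hr
    simp only at hr ⊢
    set m := q / 2 with hm
    -- first term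
    have hfun1 : (fun z : ℝ × (Fin ℓ → ℝ) =>
        z.1 ^ (1 + β) * pr (fun w => ∑ j ∈ Finset.range (m + 1), w.1 ^ (2 * j) * p j w.2) z)
        = fun z : ℝ × (Fin ℓ → ℝ) => z.1 ^ (1 + β) *
            ∑ j ∈ Finset.range (m + 1), ((2 * j : ℕ) : ℝ) * z.1 ^ (2 * j - 1) * p j z.2 :=
      funext fun z => by rw [pr_sum]
    have hA : HasDerivAt (fun s : ℝ => s ^ (1 + β)) ((1 + β) * r ^ β) r := by
      have h0 := Real.hasDerivAt_rpow_const (x := r) (p := 1 + β) (Or.inl (ne_of_gt hr))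
      simpa [add_sub_cancel_left] using h0
    have hB : HasDerivAt
        (fun s : ℝ => ∑ j ∈ Finset.range (m + 1), ((2 * j : ℕ) : ℝ) * s ^ (2 * j - 1) * p j y2)
        (∑ j ∈ Finset.range (m + 1),
          ((2 * j : ℕ) : ℝ) * (((2 * j - 1 : ℕ) : ℝ) * r ^ (2 * j - 1 - 1)) * p j y2) r := by
      refine HasDerivAt.fun_sum fun j hj => ?_
      exact ((hasDerivAt_pow (2 * j - 1) r).const_mul (((2 * j : ℕ) : ℝ))).mul_const (p j y2)
    have hAB := hA.mul hB
    have hterm : pr (fun z : ℝ × (Fin ℓ → ℝ) =>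
        z.1 ^ (1 + β) * pr (fun w => ∑ j ∈ Finset.range (m + 1), w.1 ^ (2 * j) * p j w.2) z)
          (r, y2)
        = (1 + β) * r ^ β *
            (∑ j ∈ Finset.range (m + 1), ((2 * j : ℕ) : ℝ) * r ^ (2 * j - 1) * p j y2)
          + r ^ (1 + β) * (∑ j ∈ Finset.range (m + 1),
            ((2 * j : ℕ) : ℝ) * (((2 * j - 1 : ℕ) : ℝ) * r ^ (2 * j - 1 - 1)) * p j y2) := by
      rw [hfun1]
      simp only [pr]
      exact hAB.deriv
    -- Laplacian term
    have hlap : ∀ j : ℕ, ∀ y' : Fin ℓ → ℝ,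
        MvPolynomial.eval y' (∑ i : Fin ℓ, MvPolynomial.pderiv i (MvPolynomial.pderiv i (P j)))
          = -((2 * (j : ℝ) + 2) * (2 * (j : ℝ) + 2 + β)) * p (j + 1) y' := by
      intro j y'
      have hc1 : (0:ℝ) < 2 * (j : ℝ) + 2 := by positivity
      have hc2 : (0:ℝ) < 2 * (j : ℝ) + 2 + β := by linarith [hβ, hc1]
      have hc : ((2 * (j : ℝ) + 2) * (2 * (j : ℝ) + 2 + β)) ≠ 0 := (mul_pos hc1 hc2).ne'
      have hL : lapY (p j) y' =
          MvPolynomial.eval y' (∑ i : Fin ℓ, MvPolynomial.pderiv i (MvPolynomial.pderiv i (P j))) := by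
        rw [hfj j]; exact lapY_eval (P j) y'
      rw [hrec j]
      simp only
      rw [← hL]
      field_simp
    have hSval : (fun w : ℝ × (Fin ℓ → ℝ) => ∑ j ∈ Finset.range (m + 1), w.1 ^ (2 * j) * p j w.2)
        = fun w : ℝ × (Fin ℓ → ℝ) =>
            ∑ j ∈ Finset.range (m + 1), w.1 ^ (2 * j) * MvPolynomial.eval w.2 (P j) :=
      funext fun w => Finset.sum_congr rfl fun j _ => by rw [hP j]
    have hlapy : lapy (fun w : ℝ × (Fin ℓ → ℝ) =>
        ∑ j ∈ Finset.range (m + 1), w.1 ^ (2 * j) * p j w.2) (r, y2)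
        = ∑ j ∈ Finset.range (m + 1), r ^ (2 * j) *
            (-((2 * (j : ℝ) + 2) * (2 * (j : ℝ) + 2 + β)) * p (j + 1) y2) := by
      rw [hSval, lapy]
      have hstep : ∀ i : Fin ℓ,
          py i (fun w : ℝ × (Fin ℓ → ℝ) =>
            ∑ j ∈ Finset.range (m + 1), w.1 ^ (2 * j) * MvPolynomial.eval w.2 (P j))
          = fun z : ℝ × (Fin ℓ → ℝ) => ∑ j ∈ Finset.range (m + 1),
              z.1 ^ (2 * j) * MvPolynomial.eval z.2 (MvPolynomial.pderiv i (P j)) :=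
        fun i => funext fun z => py_sum_eval P i z
      calc (∑ i : Fin ℓ, py i (py i (fun w : ℝ × (Fin ℓ → ℝ) =>
              ∑ j ∈ Finset.range (m + 1), w.1 ^ (2 * j) * MvPolynomial.eval w.2 (P j))) (r, y2))
          = ∑ i : Fin ℓ, ∑ j ∈ Finset.range (m + 1), r ^ (2 * j) *
              MvPolynomial.eval y2 (MvPolynomial.pderiv i (MvPolynomial.pderiv i (P j))) := by
            refine Finset.sum_congr rfl fun i _ => ?_
            rw [hstep i, py_sum_eval (fun j => MvPolynomial.pderiv i (P j)) i (r, y2)]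
        _ = ∑ j ∈ Finset.range (m + 1), ∑ i : Fin ℓ, r ^ (2 * j) *
              MvPolynomial.eval y2 (MvPolynomial.pderiv i (MvPolynomial.pderiv i (P j))) :=
            Finset.sum_comm
        _ = ∑ j ∈ Finset.range (m + 1), r ^ (2 * j) *
              (-((2 * (j : ℝ) + 2) * (2 * (j : ℝ) + 2 + β)) * p (j + 1) y2) := by
            refine Finset.sum_congr rfl fun j _ => ?_
            rw [← Finset.mul_sum, ← map_sum, hlap j y2]
    rw [hterm, hlapy]
    -- algebra
    have hrne : r ≠ 0 := ne_of_gt hr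
    have hx1 : r ^ (-(1 + β)) * r ^ β = r⁻¹ := by
      rw [← Real.rpow_add hr]
      have he : -(1 + β) + β = -1 := by ring
      rw [he, Real.rpow_neg_one]
    have hx2 : r ^ (-(1 + β)) * r ^ (1 + β) = 1 := by
      rw [← Real.rpow_add hr, neg_add_cancel, Real.rpow_zero]
    set A := ∑ j ∈ Finset.range (m + 1), ((2 * j : ℕ) : ℝ) * r ^ (2 * j - 1) * p j y2 with hAdef
    set B := ∑ j ∈ Finset.range (m + 1),
        ((2 * j : ℕ) : ℝ) * (((2 * j - 1 : ℕ) : ℝ) * r ^ (2 * j - 1 - 1)) * p j y2 with hBdef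
    have hred : r ^ (-(1 + β)) * ((1 + β) * r ^ β * A + r ^ (1 + β) * B)
        = (1 + β) * r⁻¹ * A + B := by
      have : r ^ (-(1 + β)) * ((1 + β) * r ^ β * A + r ^ (1 + β) * B)
          = (1 + β) * (r ^ (-(1 + β)) * r ^ β) * A + (r ^ (-(1 + β)) * r ^ (1 + β)) * B := by
        ring
      rw [this, hx1, hx2]; ring
    rw [hred]
    rw [hAdef, hBdef, Finset.mul_sum, ← Finset.sum_add_distrib]
    -- now a single shifted cancellation
    have hu0 : (1 + β) * r⁻¹ * (((2 * 0 : ℕ) : ℝ) * r ^ (2 * 0 - 1) * p 0 y2)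
        + ((2 * 0 : ℕ) : ℝ) * (((2 * 0 - 1 : ℕ) : ℝ) * r ^ (2 * 0 - 1 - 1)) * p 0 y2 = 0 := by
      norm_num
    have hvm : r ^ (2 * m) * (-((2 * (m : ℝ) + 2) * (2 * (m : ℝ) + 2 + β)) * p (m + 1) y2) = 0 := by
      rw [hzero (m + 1) (by omega) y2]
      ring
    rw [Finset.sum_range_succ' (fun j => (1 + β) * r⁻¹ * (((2 * j : ℕ) : ℝ) * r ^ (2 * j - 1) * p j y2)
        + ((2 * j : ℕ) : ℝ) * (((2 * j - 1 : ℕ) : ℝ) * r ^ (2 * j - 1 - 1)) * p j y2),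
      Finset.sum_range_succ (fun j => r ^ (2 * j) *
        (-((2 * (j : ℝ) + 2) * (2 * (j : ℝ) + 2 + β)) * p (j + 1) y2))]
    rw [hu0, hvm, add_zero, add_zero, ← Finset.sum_add_distrib]
    refine Finset.sum_eq_zero fun k _ => ?_
    have e1 : 2 * (k + 1) - 1 = 2 * k + 1 := by omega
    have e2 : 2 * (k + 1) - 1 - 1 = 2 * k := by omega
    have e3 : (2 * (k + 1) : ℕ) = 2 * k + 2 := by omega
    rw [e2, e1, e3]
    push_cast
    have hpow : r ^ (2 * k + 1) = r ^ (2 * k) * r := pow_succ r (2 * k)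
    rw [hpow]
    field_simp
    ring

end
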